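/- The detailed balance condition for a product measure μ = ⊗μ_i under the ASEP(q,j) dynamics holds if and only if μ_i(η_i - 1)μ_{i+1}(η_{i+1}+1)·q^{2j}·[2j-η_i+1]_q·[η_{i+1}+1]_q = μ_i(η_i)μ_{i+1}(η_{i+1})·q^{-2j}·[η_i]_q·[2j-η_{i+1}]_q for all admissible η_i, η_{i+1}, which forces the ratio μ_i(n)/μ_i(n-1) = β q^{-4ji} [2j-n+1]_q/[n]_q for some constant β independent of i and n. -/

import Mathlib

/-- The q-number [n]_q = (q^n - q^{-n})/(q - q^{-1}). -/
noncomputable def qNum (q : ℝ) (n : ℕ) : ℝ := (q ^ n - q⁻¹ ^ n) / (q - q⁻¹)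

/-- Configuration obtained from η by moving one particle from site i to site i+1. -/
def moveR (η : ℕ → ℕ) (i : ℕ) : ℕ → ℕ :=
  fun k => if k = i then η i - 1 else if k = i + 1 then η (i + 1) + 1 else η k

/-- The two-site equation forced by detailed balance (J = 2j):
μ_i(a-1)μ_{i+1}(b+1) q^{2j} [2j-a+1]_q [b+1]_q = μ_i(a)μ_{i+1}(b) q^{-2j} [a]_q [2j-b]_q. -/
def twoSiteEq (q : ℝ) (J : ℕ) (μ : ℕ → ℕ → ℝ) (i a b : ℕ) : Prop :=
  μ i (a - 1) * μ (i + 1) (b + 1) * q ^ (J : ℤ) * qNum q (J - a + 1) * qNum q (b + 1)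
    = μ i a * μ (i + 1) b * q ^ (-(J : ℤ)) * qNum q a * qNum q (J - b)

lemma qNum_pos {q : ℝ} (hq0 : 0 < q) (hq1 : q < 1) {n : ℕ} (hn : 1 ≤ n) : 0 < qNum q n := by
  have h1 : 1 < q⁻¹ := (one_lt_inv_iff₀).2 ⟨hq0, hq1⟩
  have h2 : q ^ n < 1 := pow_lt_one₀ hq0.le hq1 (by omega)
  have h3 : 1 < q⁻¹ ^ n := one_lt_pow₀ h1 (by omega)
  have h4 : q < q⁻¹ := lt_trans hq1 h1
  exact div_pos_of_neg_of_neg (by linarith) (by linarith)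

lemma db_iff (q : ℝ) (hq0 : 0 < q) (hq1 : q < 1) (J L : ℕ)
    (μ : ℕ → ℕ → ℝ) (hμ : ∀ i n, 1 ≤ i → i ≤ L → n ≤ J → 0 < μ i n)
    (η : ℕ → ℕ) (hη : ∀ k, η k ≤ J) (i : ℕ) (hi : 1 ≤ i) (hil : i + 1 ≤ L)
    (ha : 1 ≤ η i) (hb : η (i + 1) < J) :
    ((∏ k ∈ Finset.Icc 1 L, μ k (η k)) *
        (q ^ ((η i : ℤ) - η (i + 1) - (J + 1)) * qNum q (η i) * qNum q (J - η (i + 1)))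
      = (∏ k ∈ Finset.Icc 1 L, μ k (moveR η i k)) *
        (q ^ ((moveR η i i : ℤ) - moveR η i (i + 1) + (J + 1)) *
          qNum q (J - moveR η i i) * qNum q (moveR η i (i + 1))))
    ↔ twoSiteEq q J μ i (η i) (η (i + 1)) := by
  have hiI : i ∈ Finset.Icc 1 L := by simp only [Finset.mem_Icc]; omega
  have hi1I : i + 1 ∈ (Finset.Icc 1 L).erase i := by
    simp only [Finset.mem_erase, Finset.mem_Icc]; omega
  set s := ((Finset.Icc 1 L).erase i).erase (i + 1) with hs
  have split1 : ∀ f : ℕ → ℝ,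
      ∏ k ∈ Finset.Icc 1 L, f k = f i * (f (i + 1) * ∏ k ∈ s, f k) := by
    intro f
    rw [← Finset.mul_prod_erase _ f hiI, ← Finset.mul_prod_erase _ f hi1I]
  have hmv : ∀ k ∈ s, μ k (moveR η i k) = μ k (η k) := by
    intro k hk
    simp only [hs, Finset.mem_erase, Finset.mem_Icc] at hk
    simp only [moveR, if_neg hk.2.1, if_neg hk.1]
  rw [split1 (fun k => μ k (η k)), split1 (fun k => μ k (moveR η i k)),
    Finset.prod_congr rfl hmv]
  have hm1 : moveR η i i = η i - 1 := by simp [moveR]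
  have hm2 : moveR η i (i + 1) = η (i + 1) + 1 := by simp [moveR]
  rw [hm1, hm2]
  have hP : 0 < ∏ k ∈ s, μ k (η k) := by
    apply Finset.prod_pos
    intro k hk
    simp only [hs, Finset.mem_erase, Finset.mem_Icc] at hk
    exact hμ k (η k) hk.2.2.1 hk.2.2.2 (hη k)
  have hηi := hη i
  rw [Nat.cast_sub ha, show J - (η i - 1) = J - η i + 1 from by omega]
  push_cast
  rw [show ((η i : ℤ) - η (i + 1) - ((J : ℤ) + 1)) = ((η i : ℤ) - η (i + 1) - 1) + (-(J : ℤ))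
        from by ring,
      show ((η i : ℤ) - 1 - ((η (i + 1) : ℤ) + 1) + ((J : ℤ) + 1))
          = ((η i : ℤ) - η (i + 1) - 1) + (J : ℤ) from by ring,
      zpow_add₀ hq0.ne', zpow_add₀ hq0.ne']
  unfold twoSiteEq
  rw [zpow_neg, zpow_natCast]
  set X := q ^ ((η i : ℤ) - η (i + 1) - 1) with hX
  have hXpos : 0 < X := zpow_pos hq0 _
  set P := ∏ k ∈ s, μ k (η k)
  have hc : P * X ≠ 0 := by positivity
  constructor
  · intro h
    exact mul_left_cancel₀ hc (by linear_combination -h)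
  · intro h
    linear_combination (-(P * X)) * h

/-- Detailed balance of the product measure ⊗μ_i under ASEP(q,j) holds iff the two-site
equation holds for all admissible values, which forces
μ_i(n)/μ_i(n-1) = β q^{-4ji} [2j-n+1]_q/[n]_q for some β (J = 2j). -/
theorem stmt12 (q : ℝ) (hq0 : 0 < q) (hq1 : q < 1) (J L : ℕ) (hJ : 1 ≤ J) (hL : 2 ≤ L)
    (μ : ℕ → ℕ → ℝ) (hμ : ∀ i n, 1 ≤ i → i ≤ L → n ≤ J → 0 < μ i n) :
    ((∀ η : ℕ → ℕ, (∀ k, η k ≤ J) → ∀ i, 1 ≤ i → i + 1 ≤ L →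
        1 ≤ η i → η (i + 1) < J →
        (∏ k ∈ Finset.Icc 1 L, μ k (η k)) *
            (q ^ ((η i : ℤ) - η (i + 1) - (J + 1)) * qNum q (η i) * qNum q (J - η (i + 1)))
          = (∏ k ∈ Finset.Icc 1 L, μ k (moveR η i k)) *
            (q ^ ((moveR η i i : ℤ) - moveR η i (i + 1) + (J + 1)) *
              qNum q (J - moveR η i i) * qNum q (moveR η i (i + 1)))) ↔
      (∀ i a b, 1 ≤ i → i + 1 ≤ L → 1 ≤ a → a ≤ J → b < J → twoSiteEq q J μ i a b)) ∧
    ((∀ i a b, 1 ≤ i → i + 1 ≤ L → 1 ≤ a → a ≤ J → b < J → twoSiteEq q J μ i a b) →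
      ∃ β : ℝ, ∀ i n, 1 ≤ i → i ≤ L → 1 ≤ n → n ≤ J →
        μ i n / μ i (n - 1)
          = β * q ^ (-(2 * (J : ℤ) * i)) * qNum q (J - n + 1) / qNum q n) := by
  constructor
  · constructor
    · intro h i a b hi hil ha haJ hb
      set η₀ : ℕ → ℕ := fun k => if k = i then a else if k = i + 1 then b else 0 with hη₀
      have hη₀J : ∀ k, η₀ k ≤ J := by
        intro k; simp only [hη₀]; split_ifs <;> omega
      have e1 : η₀ i = a := by simp [hη₀]
      have e2 : η₀ (i + 1) = b := by simp [hη₀]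
      have hdb := h η₀ hη₀J i hi hil (by rw [e1]; exact ha) (by rw [e2]; exact hb)
      have := (db_iff q hq0 hq1 J L μ hμ η₀ hη₀J i hi hil
        (by rw [e1]; exact ha) (by rw [e2]; exact hb)).mp hdb
      rwa [e1, e2] at this
    · intro h η hη i hi hil ha hb
      exact (db_iff q hq0 hq1 J L μ hμ η hη i hi hil ha hb).mpr
        (h i (η i) (η (i + 1)) hi hil ha (hη i) hb)
  · intro h
    set Q : ℝ := q ^ (2 * J) with hQ
    have hQpos : 0 < Q := by positivity
    set g : ℕ → ℕ → ℝ :=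
      fun i n => μ i n / μ i (n - 1) * qNum q n / qNum q (J - n + 1) with hg
    have key : ∀ i a b, 1 ≤ i → i + 1 ≤ L → 1 ≤ a → a ≤ J → b < J →
        g i a = Q * g (i + 1) (b + 1) := by
      intro i a b hi hil ha1 haJ hbJ
      have ht := h i a b hi hil ha1 haJ hbJ
      unfold twoSiteEq at ht
      rw [zpow_neg, zpow_natCast] at ht
      have h1 : 0 < μ i a := hμ i a hi (by omega) haJ
      have h2 : 0 < μ i (a - 1) := hμ i (a - 1) hi (by omega) (by omega)
      have h3 : 0 < μ (i + 1) b := hμ (i + 1) b (by omega) hil (by omega)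
      have h4 : 0 < μ (i + 1) (b + 1) := hμ (i + 1) (b + 1) (by omega) hil (by omega)
      have n1 : qNum q a ≠ 0 := (qNum_pos hq0 hq1 ha1).ne'
      have n2 : qNum q (J - a + 1) ≠ 0 := (qNum_pos hq0 hq1 (by omega)).ne'
      have n3 : qNum q (b + 1) ≠ 0 := (qNum_pos hq0 hq1 (by omega)).ne'
      have n4 : qNum q (J - b) ≠ 0 := (qNum_pos hq0 hq1 (by omega)).ne'
      have hqJ : (q : ℝ) ^ J ≠ 0 := by positivity
      simp only [hg]
      rw [show b + 1 - 1 = b from rfl, show J - (b + 1) + 1 = J - b from by omega, hQ]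
      field_simp at ht ⊢
      linear_combination -ht
    have main : ∀ i, 1 ≤ i → i ≤ L → ∀ n, 1 ≤ n → n ≤ J →
        g i n = g 1 1 * Q⁻¹ ^ (i - 1) := by
      intro i
      induction i with
      | zero => omega
      | succ m ih =>
        intro h1 hL' n hn1 hnJ
        rcases Nat.eq_zero_or_pos m with hm | hm
        · subst hm
          have k1 := key 1 n 0 le_rfl (by omega) hn1 hnJ (by omega)
          have k2 := key 1 1 0 le_rfl (by omega) le_rfl hJ (by omega)
          rw [k1, k2]
          simp
        · have k1 := key m 1 (n - 1) hm hL' le_rfl hJ (by omega)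
          rw [show n - 1 + 1 = n from by omega] at k1
          have ihm := ih hm (by omega) 1 le_rfl hJ
          have : g (m + 1) n = Q⁻¹ * g m 1 := by
            rw [k1, inv_mul_cancel_left₀ hQpos.ne']
          rw [this, ihm, show m + 1 - 1 = m from rfl,
            show Q⁻¹ ^ m = Q⁻¹ ^ (m - 1) * Q⁻¹ from by
              rw [← pow_succ]; congr 1; omega]
          ring
    refine ⟨g 1 1 * Q, ?_⟩
    intro i n hi1 hiL hn1 hnJ
    have hgi := main i hi1 hiL n hn1 hnJ
    have hzp : q ^ (-(2 * (J : ℤ) * i)) = Q⁻¹ ^ i := by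
      rw [show -(2 * (J : ℤ) * i) = -((2 * J * i : ℕ) : ℤ) from by push_cast; ring,
        zpow_neg, zpow_natCast, pow_mul, ← inv_pow, hQ]
    have n1 : qNum q n ≠ 0 := (qNum_pos hq0 hq1 hn1).ne'
    have n2 : qNum q (J - n + 1) ≠ 0 := (qNum_pos hq0 hq1 (by omega)).ne'
    have hμ2 : μ i (n - 1) ≠ 0 := (hμ i (n - 1) hi1 hiL (by omega)).ne'
    have hq : q ≠ 0 := hq0.ne'
    have hQne : Q ≠ 0 := hQpos.ne'
    have hQi : Q⁻¹ ^ i = Q⁻¹ ^ (i - 1) * Q⁻¹ := by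
      rw [← pow_succ, show i - 1 + 1 = i from by omega]
    rw [hzp, hQi, show g 1 1 * Q * (Q⁻¹ ^ (i - 1) * Q⁻¹) = g 1 1 * Q⁻¹ ^ (i - 1) from by
      field_simp, ← hgi]
    simp only [hg]
    field_simp
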